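/- If G⃗₁ and G⃗₂ are orientations of the same simple graph G, then |th(G⃗₁) − th(G⃗₂)| ≤ ⌊|E(G)|/2⌋. -/

import Mathlib

open Set

/-- One time step of standard zero forcing on a digraph with arc relation `A`:
every blue vertex having a unique white out-neighbor forces it blue. -/
def dstep {V : Type*} (A : V → V → Prop) (S : Set V) : Set V :=
  S ∪ {w | ∃ u ∈ S, A u w ∧ ∀ x, A u x → x ∉ S → x = w}

/-- `B` is a zero forcing set of the digraph with arc relation `A`. -/
def IsZFS {V : Type*} (A : V → V → Prop) (B : Set V) : Prop :=
  ∃ t, (dstep A)^[t] B = Set.univ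

/-- Propagation time of `B` in the digraph with arc relation `A`. -/
noncomputable def dpt {V : Type*} (A : V → V → Prop) (B : Set V) : ℕ :=
  sInf {t | (dstep A)^[t] B = Set.univ}

/-- The throttling number of the digraph with arc relation `A`. -/
noncomputable def dth {V : Type*} (A : V → V → Prop) : ℕ :=
  sInf {k | ∃ B : Set V, IsZFS A B ∧ k = B.ncard + dpt A B}

/-- `A` is an orientation of the simple graph `G`: every arc lies on an edge of `G`,
and each edge of `G` gets exactly one direction. -/
def IsOrientation {V : Type*} (G : SimpleGraph V) (A : V → V → Prop) : Prop :=
  (∀ u v, A u v → G.Adj u v) ∧ ∀ u v, G.Adj u v → (A u v ↔ ¬ A v u)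


section Aux
variable {V : Type*}
lemma subset_dstep (A : V → V → Prop) (S : Set V) : S ⊆ dstep A S :=
  Set.subset_union_left
lemma dstep_mono (A : V → V → Prop) {S T : Set V} (h : S ⊆ T) : dstep A S ⊆ dstep A T := by
  rintro w (hw | ⟨u, hu, hA, huniq⟩)
  · exact Or.inl (h hw)
  · by_cases hwT : w ∈ T
    · exact Or.inl hwT
    · exact Or.inr ⟨u, h hu, hA, fun x hx hxT => huniq x hx fun hxS => hxT (h hxS)⟩
lemma iter_mono (A : V → V → Prop) {S T : Set V} (h : S ⊆ T) (n : ℕ) :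
    (dstep A)^[n] S ⊆ (dstep A)^[n] T := by
  induction n generalizing S T with
  | zero => exact h
  | succ n ih =>
    rw [Function.iterate_succ_apply', Function.iterate_succ_apply']
    exact dstep_mono A (ih h)
lemma subset_iter (A : V → V → Prop) (S : Set V) (n : ℕ) : S ⊆ (dstep A)^[n] S := by
  induction n with
  | zero => exact subset_rfl
  | succ n ih =>
    rw [Function.iterate_succ_apply']
    exact ih.trans (subset_dstep A _)
lemma iter_le_iter (A : V → V → Prop) (S : Set V) {m n : ℕ} (h : m ≤ n) :
    (dstep A)^[m] S ⊆ (dstep A)^[n] S := by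
  obtain ⟨k, rfl⟩ := Nat.exists_eq_add_of_le h
  rw [Nat.add_comm, Function.iterate_add_apply]
  exact subset_iter A _ k
lemma zfs_univ (A : V → V → Prop) : IsZFS A (Set.univ : Set V) := ⟨0, rfl⟩
lemma dth_spec (A : V → V → Prop) :
    ∃ B : Set V, IsZFS A B ∧ dth A = B.ncard + dpt A B := by
  have h : dth A ∈ {k | ∃ B : Set V, IsZFS A B ∧ k = B.ncard + dpt A B} :=
    Nat.sInf_mem ⟨_, Set.univ, zfs_univ A, rfl⟩
  exact h
lemma dpt_spec {A : V → V → Prop} {B : Set V} (h : IsZFS A B) :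
    (dstep A)^[dpt A B] B = Set.univ :=
  Nat.sInf_mem h
lemma dth_le {A : V → V → Prop} {B : Set V} (h : IsZFS A B) :
    dth A ≤ B.ncard + dpt A B :=
  Nat.sInf_le ⟨B, h, rfl⟩
lemma dpt_le {A : V → V → Prop} {B : Set V} {t : ℕ} (h : (dstep A)^[t] B = Set.univ) :
    dpt A B ≤ t :=
  Nat.sInf_le h

/-- Reverse the arc `u → v` of `A`. -/
def aflip (A : V → V → Prop) (u v : V) : V → V → Prop :=
  fun a b => ¬(a = u ∧ b = v) ∧ ((a = v ∧ b = u) ∨ A a b)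

lemma aflip_of_ne {A : V → V → Prop} {u v a b : V}
    (h1 : ¬(a = u ∧ b = v)) (h2 : ¬(a = v ∧ b = u)) : aflip A u v a b ↔ A a b := by
  simp [aflip, h1, h2]

lemma aflip_dth [Fintype V] {A : V → V → Prop} {u v : V}
    (huv : A u v) (hvu : ¬ A v u) (hne : u ≠ v) : dth (aflip A u v) ≤ dth A + 1 := by
  classical
  obtain ⟨B, hZFS, hEq⟩ := dth_spec A
  set t := dpt A B with htdef
  have ht : (dstep A)^[t] B = Set.univ := dpt_spec hZFS
  set S : ℕ → Set V := fun r => (dstep A)^[r] B with hS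
  have hne_u : {r | u ∈ S r}.Nonempty := ⟨t, by simp [hS, ht]⟩
  have hne_v : {r | v ∈ S r}.Nonempty := ⟨t, by simp [hS, ht]⟩
  set su := sInf {r | u ∈ S r} with hsu
  set sv := sInf {r | v ∈ S r} with hsv
  have hu_mem : u ∈ S su := Nat.sInf_mem hne_u
  have hv_mem : v ∈ S sv := Nat.sInf_mem hne_v
  have hu_le : ∀ {r}, su ≤ r → u ∈ S r := fun h => iter_le_iter A B h hu_mem
  have hv_le : ∀ {r}, sv ≤ r → v ∈ S r := fun h => iter_le_iter A B h hv_mem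
  have hsu_le : ∀ {r}, u ∈ S r → su ≤ r := fun h => Nat.sInf_le h
  have hsv_le : ∀ {r}, v ∈ S r → sv ≤ r := fun h => Nat.sInf_le h
  set c : V := if su ≤ sv then v else u with hc
  set B' : Set V := insert c B with hB'
  set S' : ℕ → Set V := fun r => (dstep (aflip A u v))^[r] B' with hS'
  have hSsucc : ∀ r, S (r+1) = dstep A (S r) := fun r => Function.iterate_succ_apply' (dstep A) r B
  have hS'succ : ∀ r, S' (r+1) = dstep (aflip A u v) (S' r) :=
    fun r => Function.iterate_succ_apply' (dstep (aflip A u v)) r B'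
  have hcB' : c ∈ B' := Set.mem_insert c B
  have hc_mem : ∀ r, c ∈ S' r := fun r => subset_iter _ B' r hcB'
  -- main induction
  have main : ∀ r, S r ⊆ S' r := by
    intro r
    induction r with
    | zero => exact (Set.subset_insert c B)
    | succ r ih =>
      intro w hw
      have hw' : w ∈ dstep A (S r) := by rw [← hSsucc]; exact hw
      rw [hS'succ]
      rcases hw' with hw' | ⟨z, hz, hA, huniq⟩
      · exact subset_dstep _ _ (ih hw')
      · by_cases hwS' : w ∈ S' r
        · exact subset_dstep _ _ hwS'
        -- w is not yet blue in the primed process; replicate the force by z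
        have hwS : w ∉ S r := fun h => hwS' (ih h)
        -- w ≠ v nor can the force be along the flipped arc
        have hzw_ne1 : ¬(z = u ∧ w = v) := by
          rintro ⟨hzu, hwv⟩
          apply hwS'
          by_cases hcase : su ≤ sv
          · have hcv : c = v := hc.trans (if_pos hcase)
            rw [hwv, ← hcv]; exact hc_mem r
          · have h1 : su ≤ r := hsu_le (hzu ▸ hz)
            have h2 : sv ≤ r := le_trans (le_of_not_ge hcase) h1
            rw [hwv]; exact ih (hv_le h2)
        have hzw_ne2 : ¬(z = v ∧ w = u) := by
          rintro ⟨rfl, rfl⟩; exact hvu hA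
        refine Or.inr ⟨z, ih hz, (aflip_of_ne hzw_ne1 hzw_ne2).mpr hA, ?_⟩
        intro x hx hxS'
        by_cases hx1 : z = u ∧ x = v
        · exact absurd hx (by simp [aflip, hx1])
        by_cases hx2 : z = v ∧ x = u
        · -- need u ∈ S' r, contradicting hxS'
          exfalso
          obtain ⟨hzv, hxu⟩ := hx2
          apply hxS'
          by_cases hcase : su ≤ sv
          · have h1 : sv ≤ r := hsv_le (hzv ▸ hz)
            rw [hxu]; exact ih (hu_le (le_trans hcase h1))
          · have hcu : c = u := hc.trans (if_neg hcase)
            rw [hxu, ← hcu]; exact hc_mem r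
        · have hxA : A z x := (aflip_of_ne hx1 hx2).mp hx
          exact huniq x hxA fun h => hxS' (ih h)
  have hZFS' : IsZFS (aflip A u v) B' := by
    refine ⟨t, ?_⟩
    apply Set.eq_univ_of_univ_subset
    rw [← ht]
    exact main t
  have hpt' : dpt (aflip A u v) B' ≤ t := by
    apply dpt_le
    apply Set.eq_univ_of_univ_subset
    rw [← ht]
    exact main t
  calc dth (aflip A u v) ≤ B'.ncard + dpt (aflip A u v) B' := dth_le hZFS'
    _ ≤ (B.ncard + 1) + t := by
        have h1 : B'.ncard ≤ B.ncard + 1 := by rw [hB']; exact Set.ncard_insert_le c B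
        omega
    _ = dth A + 1 := by omega

lemma aflip_dth' [Fintype V] {A : V → V → Prop} {u v : V}
    (huv : A u v) (hvu : ¬ A v u) (hne : u ≠ v) : dth A ≤ dth (aflip A u v) + 1 := by
  have h1 : aflip A u v v u := by simp [aflip, hne, Ne.symm hne]
  have h2 : ¬ aflip A u v u v := by simp [aflip]
  have key := aflip_dth h1 h2 (Ne.symm hne)
  have heq : aflip (aflip A u v) v u = A := by
    funext a b
    rw [eq_iff_iff]
    by_cases hab1 : a = v ∧ b = u
    · obtain ⟨rfl, rfl⟩ := hab1
      simp [aflip, hne, Ne.symm hne, hvu]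
    · by_cases hab2 : a = u ∧ b = v
      · obtain ⟨rfl, rfl⟩ := hab2
        simp [aflip, hne, Ne.symm hne, huv]
      · rw [aflip_of_ne hab1 hab2, aflip_of_ne hab2 hab1]
  rwa [heq] at key
lemma tp_dth [Fintype V] (A : V → V → Prop) : dth (fun x y => A y x) ≤ dth A := by
  classical
  obtain ⟨B, hZFS, hEq⟩ := dth_spec A
  set t := dpt A B with htdef
  have ht : (dstep A)^[t] B = Set.univ := dpt_spec hZFS
  set S : ℕ → Set V := fun r => (dstep A)^[r] B with hS
  have hSsucc : ∀ r, S (r+1) = dstep A (S r) := fun r => Function.iterate_succ_apply' (dstep A) r B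
  set ft : V → ℕ := fun x => sInf {r | x ∈ S r} with hft
  have hftne : ∀ x : V, {r | x ∈ S r}.Nonempty := fun x => ⟨t, by simp [hS, ht]⟩
  have hft_memS : ∀ x, x ∈ S (ft x) := fun x => Nat.sInf_mem (hftne x)
  have hft_le : ∀ x, ft x ≤ t := fun x => Nat.sInf_le (by simp [hS, ht])
  have hft_min : ∀ x r, x ∈ S r → ft x ≤ r := fun x r h => Nat.sInf_le h
  have hft_pos : ∀ x, x ∉ B → ft x ≠ 0 := by
    intro x hx h0
    have hmem := hft_memS x
    rw [h0] at hmem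
    exact hx hmem
  have hft_notmem : ∀ x, x ∉ B → x ∉ S (ft x - 1) := by
    intro x hx hmem
    have h1 := hft_min x _ hmem
    have h2 := hft_pos x hx
    omega
  have hforce : ∀ x : V, ∃ z, x ∉ B →
      z ∈ S (ft x - 1) ∧ A z x ∧ ∀ y, A z y → y ∉ S (ft x - 1) → y = x := by
    intro x
    by_cases hx : x ∈ B
    · exact ⟨x, fun h => (h hx).elim⟩
    · have h0 : ft x ≠ 0 := hft_pos x hx
      have hstep : S (ft x) = dstep A (S (ft x - 1)) := by
        conv_lhs => rw [show ft x = (ft x - 1) + 1 by omega]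
        exact hSsucc _
      have hx1 : x ∈ dstep A (S (ft x - 1)) := hstep ▸ hft_memS x
      rcases hx1 with h | ⟨z, hz, hA, huniq⟩
      · exact absurd h (hft_notmem x hx)
      · exact ⟨z, fun _ => ⟨hz, hA, huniq⟩⟩
  choose p hp using hforce
  have hinj : Set.InjOn p Bᶜ := by
    intro x hx y hy hxy
    by_contra hne2
    have hx' := hp x hx
    have hy' := hp y hy
    have h1 : y ∈ S (ft x - 1) := by
      by_contra hny
      exact hne2 ((hx'.2.2 y (by rw [hxy]; exact hy'.2.1) hny).symm)
    have h2 : x ∈ S (ft y - 1) := by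
      by_contra hnx
      exact hne2 (hy'.2.2 x (by rw [← hxy]; exact hx'.2.1) hnx)
    have h3 := hft_min y _ h1
    have h4 := hft_min x _ h2
    have h5 := hft_pos x hx
    have h6 := hft_pos y hy
    omega
  set Rev : Set V := (p '' Bᶜ)ᶜ with hRev
  have hRev_card : Rev.ncard = B.ncard := by
    have h1 : (p '' Bᶜ).ncard = Bᶜ.ncard := Set.ncard_image_of_injOn hinj
    have h2 : B.ncard + Bᶜ.ncard = Nat.card V := Set.ncard_add_ncard_compl B
    have h3 : (p '' Bᶜ).ncard + Rev.ncard = Nat.card V := by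
      rw [hRev]; exact Set.ncard_add_ncard_compl _
    omega
  set At : V → V → Prop := fun x y => A y x with hAt
  have hTsucc : ∀ r, (dstep At)^[r+1] Rev = dstep At ((dstep At)^[r] Rev) :=
    fun r => Function.iterate_succ_apply' _ r Rev
  have claim : ∀ r, ∀ x, (x ∈ Rev ∨ ∃ y, y ∉ B ∧ p y = x ∧ t + 1 ≤ ft y + r) →
      x ∈ (dstep At)^[r] Rev := by
    intro r
    induction r with
    | zero =>
      rintro x (hx | ⟨y, hyB, hpy, hle⟩)
      · exact hx
      · exact absurd hle (by have := hft_le y; omega)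
    | succ r ih =>
      rintro x (hx | ⟨y, hyB, hpy, hle⟩)
      · exact subset_iter At Rev (r+1) hx
      · by_cases hle' : t + 1 ≤ ft y + r
        · have hxr := ih x (Or.inr ⟨y, hyB, hpy, hle'⟩)
          rw [hTsucc]
          exact subset_dstep At _ hxr
        · rw [hTsucc]
          refine Or.inr ⟨y, ?_, ?_, ?_⟩
          · apply ih
            by_cases hyRev : y ∈ Rev
            · exact Or.inl hyRev
            · have hyim : y ∈ p '' Bᶜ := by rw [hRev] at hyRev; simpa using hyRev
              obtain ⟨w, hwB, hpw⟩ := hyim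
              refine Or.inr ⟨w, hwB, hpw, ?_⟩
              have h1 : y ∈ S (ft w - 1) := hpw ▸ (hp w hwB).1
              have h2 := hft_min y _ h1
              have h3 := hft_pos w hwB
              omega
          · show A x y
            rw [← hpy]; exact (hp y hyB).2.1
          · intro z hz hz'
            by_contra hzx
            apply hz'
            apply ih
            by_cases hzRev : z ∈ Rev
            · exact Or.inl hzRev
            · have hzim : z ∈ p '' Bᶜ := by rw [hRev] at hzRev; simpa using hzRev
              obtain ⟨w, hwB, hpw⟩ := hzim
              refine Or.inr ⟨w, hwB, hpw, ?_⟩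
              have hAzy : A z y := hz
              have hyw : y ≠ w := by
                intro h
                exact hzx (by rw [← hpw, ← h, hpy])
              have h1 : y ∈ S (ft w - 1) := by
                by_contra hny
                exact hyw ((hp w hwB).2.2 y (by rw [hpw]; exact hAzy) hny)
              have h2 := hft_min y _ h1
              have h3 := hft_pos w hwB
              omega
  have hiter : (dstep At)^[t] Rev = Set.univ := by
    apply Set.eq_univ_of_univ_subset
    intro x _
    apply claim t x
    by_cases hxRev : x ∈ Rev
    · exact Or.inl hxRev
    · have hxim : x ∈ p '' Bᶜ := by rw [hRev] at hxRev; simpa using hxRev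
      obtain ⟨w, hwB, hpw⟩ := hxim
      exact Or.inr ⟨w, hwB, hpw, by have := hft_pos w hwB; have := hft_le w; omega⟩
  have hZFS' : IsZFS At Rev := ⟨t, hiter⟩
  calc dth At ≤ Rev.ncard + dpt At Rev := dth_le hZFS'
    _ ≤ B.ncard + t := by
        have h1 := dpt_le hiter
        omega
    _ = dth A := hEq.symm

lemma tp_dth' [Fintype V] (A : V → V → Prop) : dth A ≤ dth (fun x y => A y x) := by
  exact tp_dth (fun x y => A y x)

/-- Edges on which the two orientations disagree. -/
def Dset (G : SimpleGraph V) (A₁ A₂ : V → V → Prop) : Set (Sym2 V) :=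
  {e | e ∈ G.edgeSet ∧ ∃ a b, e = s(a, b) ∧ ¬(A₁ a b ↔ A₂ a b)}

lemma dis_symm {G : SimpleGraph V} {A₁ A₂ : V → V → Prop} (h₁ : IsOrientation G A₁)
    (h₂ : IsOrientation G A₂) {a b : V} (hadj : G.Adj a b) :
    (¬(A₁ a b ↔ A₂ a b)) ↔ ¬(A₁ b a ↔ A₂ b a) := by
  have e1 := h₁.2 a b hadj
  have e2 := h₂.2 a b hadj
  have e3 := h₁.2 b a hadj.symm
  have e4 := h₂.2 b a hadj.symm
  tauto

lemma mem_Dset {G : SimpleGraph V} {A₁ A₂ : V → V → Prop} (h₁ : IsOrientation G A₁)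
    (h₂ : IsOrientation G A₂) {a b : V} (hadj : G.Adj a b) :
    s(a, b) ∈ Dset G A₁ A₂ ↔ ¬(A₁ a b ↔ A₂ a b) := by
  constructor
  · rintro ⟨-, x, y, hxy, hdis⟩
    rw [Sym2.eq_iff] at hxy
    rcases hxy with ⟨rfl, rfl⟩ | ⟨rfl, rfl⟩
    · exact hdis
    · exact (dis_symm h₁ h₂ hadj).mpr hdis
  · intro hdis
    exact ⟨G.mem_edgeSet.mpr hadj, a, b, rfl, hdis⟩

lemma aflip_orient {G : SimpleGraph V} {A : V → V → Prop} {u v : V}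
    (h : IsOrientation G A) (hadj : G.Adj u v) (huv : A u v) :
    IsOrientation G (aflip A u v) := by
  have hne := G.ne_of_adj hadj
  constructor
  · rintro a b ⟨h1, h2 | h2⟩
    · obtain ⟨rfl, rfl⟩ := h2; exact hadj.symm
    · exact h.1 a b h2
  · intro a b hadj'
    by_cases h1 : a = u ∧ b = v
    · obtain ⟨rfl, rfl⟩ := h1
      simp [aflip, hne, hne.symm]
    · by_cases h2 : a = v ∧ b = u
      · obtain ⟨rfl, rfl⟩ := h2
        simp [aflip, hne, hne.symm]
      · have h3 : ¬(b = u ∧ a = v) := fun hh => h2 ⟨hh.2, hh.1⟩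
        have h4 : ¬(b = v ∧ a = u) := fun hh => h1 ⟨hh.2, hh.1⟩
        rw [aflip_of_ne h1 h2, aflip_of_ne h3 h4]
        exact h.2 a b hadj'

lemma Dset_aflip {G : SimpleGraph V} {A₁ A₂ : V → V → Prop} {u v : V}
    (h₁ : IsOrientation G A₁) (h₂ : IsOrientation G A₂) (hadj : G.Adj u v)
    (huv : A₁ u v) (hdis : ¬(A₁ u v ↔ A₂ u v)) :
    Dset G (aflip A₁ u v) A₂ = Dset G A₁ A₂ \ {s(u, v)} := by
  have hne := G.ne_of_adj hadj
  have horient := aflip_orient h₁ hadj huv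
  have hA2 : ¬ A₂ u v := fun h => hdis (iff_of_true huv h)
  have hA2' : A₂ v u := (h₂.2 v u hadj.symm).mpr hA2
  ext e
  induction e using Sym2.ind with
  | _ a b =>
    by_cases hab : G.Adj a b
    · rw [Set.mem_diff, mem_Dset horient h₂ hab, mem_Dset h₁ h₂ hab]
      by_cases h1 : a = u ∧ b = v
      · have hfl : ¬ aflip A₁ u v a b := fun h => h.1 h1
        have hA2ab : ¬ A₂ a b := by rw [h1.1, h1.2]; exact hA2
        have heq : s(a, b) = s(u, v) := Sym2.eq_iff.mpr (Or.inl ⟨h1.1, h1.2⟩)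
        simp only [Set.mem_singleton_iff]
        constructor
        · intro hL; exact absurd (iff_of_false hfl hA2ab) hL
        · rintro ⟨-, hns⟩; exact absurd heq hns
      · by_cases h2 : a = v ∧ b = u
        · have hfl : aflip A₁ u v a b :=
            ⟨fun hc => hne (hc.1.symm.trans h2.1), Or.inl ⟨h2.1, h2.2⟩⟩
          have hA2ab : A₂ a b := by rw [h2.1, h2.2]; exact hA2'
          have heq : s(a, b) = s(u, v) := Sym2.eq_iff.mpr (Or.inr ⟨h2.1, h2.2⟩)
          simp only [Set.mem_singleton_iff]
          constructor
          · intro hL; exact absurd (iff_of_true hfl hA2ab) hL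
          · rintro ⟨-, hns⟩; exact absurd heq hns
        · have h3 := aflip_of_ne (A := A₁) h1 h2
          have hneq : s(a, b) ≠ s(u, v) := by
            rw [Ne, Sym2.eq_iff]; tauto
          simp only [Set.mem_singleton_iff]
          constructor
          · intro hL
            exact ⟨fun h => hL (h3.trans h), hneq⟩
          · rintro ⟨hd, -⟩
            exact fun h => hd (h3.symm.trans h)
    · constructor
      · rintro ⟨heE, -⟩
        exact absurd (G.mem_edgeSet.mp heE) hab
      · rintro ⟨⟨heE, -⟩, -⟩
        exact absurd (G.mem_edgeSet.mp heE) hab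

lemma dth_le_of_Dset [Fintype V] (G : SimpleGraph V) :
    ∀ (n : ℕ) (A₁ A₂ : V → V → Prop), IsOrientation G A₁ → IsOrientation G A₂ →
    (Dset G A₁ A₂).ncard = n → dth A₁ ≤ dth A₂ + n := by
  intro n
  induction n with
  | zero =>
    intro A₁ A₂ h₁ h₂ hcard
    have hempty : Dset G A₁ A₂ = ∅ := (Set.ncard_eq_zero (Set.toFinite _)).mp hcard
    have hAeq : A₁ = A₂ := by
      funext a b
      rw [eq_iff_iff]
      by_cases hab : G.Adj a b
      · by_contra hdis
        have hm : s(a, b) ∈ Dset G A₁ A₂ := (mem_Dset h₁ h₂ hab).mpr hdis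
        rw [hempty] at hm
        exact hm
      · constructor
        · intro h; exact absurd (h₁.1 a b h) hab
        · intro h; exact absurd (h₂.1 a b h) hab
    rw [hAeq]; omega
  | succ n ih =>
    intro A₁ A₂ h₁ h₂ hcard
    have hne0 : (Dset G A₁ A₂).Nonempty := Set.nonempty_of_ncard_ne_zero (by omega)
    obtain ⟨e, he⟩ := hne0
    obtain ⟨heE, x, y, rfl, hdis⟩ := he
    have hadj : G.Adj x y := G.mem_edgeSet.mp heE
    have hmem : s(x, y) ∈ Dset G A₁ A₂ := (mem_Dset h₁ h₂ hadj).mpr hdis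
    obtain ⟨u, v, hadjuv, hA1, hdis2, hes⟩ :
        ∃ u v, G.Adj u v ∧ A₁ u v ∧ ¬(A₁ u v ↔ A₂ u v) ∧ s(u, v) = s(x, y) := by
      by_cases hA1 : A₁ x y
      · exact ⟨x, y, hadj, hA1, hdis, rfl⟩
      · exact ⟨y, x, hadj.symm, (h₁.2 y x hadj.symm).mpr hA1,
          (dis_symm h₁ h₂ hadj).mp hdis, Sym2.eq_swap⟩
    have hD := Dset_aflip h₁ h₂ hadjuv hA1 hdis2
    have hmemuv : s(u, v) ∈ Dset G A₁ A₂ := by rw [hes]; exact hmem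
    have hcard' : (Dset G (aflip A₁ u v) A₂).ncard = n := by
      rw [hD, Set.ncard_diff_singleton_of_mem hmemuv, hcard]
      omega
    have horient' := aflip_orient h₁ hadjuv hA1
    have hstep := aflip_dth' hA1 ((h₁.2 u v hadjuv).mp hA1) (G.ne_of_adj hadjuv)
    have hih := ih (aflip A₁ u v) A₂ horient' h₂ hcard'
    omega


end Aux

/-- The throttling numbers of two orientations of the same graph differ by at most
`⌊|E(G)|/2⌋`. -/
theorem stmt13 {V : Type*} [Fintype V] (G : SimpleGraph V)
    (A₁ A₂ : V → V → Prop) (h₁ : IsOrientation G A₁) (h₂ : IsOrientation G A₂) :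
    dth A₁ ≤ dth A₂ + G.edgeSet.ncard / 2 ∧
    dth A₂ ≤ dth A₁ + G.edgeSet.ncard / 2 := by
  classical
  have horT : ∀ (A : V → V → Prop), IsOrientation G A → IsOrientation G (fun x y => A y x) := by
    intro A h
    refine ⟨fun u v hv => (h.1 v u hv).symm, fun u v hadj => ?_⟩
    have ha := h.2 u v hadj
    have hb := h.2 v u hadj.symm
    tauto
  have hDtp : ∀ (A B : V → V → Prop), IsOrientation G A → IsOrientation G B →
      Dset G (fun x y => A y x) B = G.edgeSet \ Dset G A B := by
    intro A B hA hB
    ext e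
    induction e using Sym2.ind with
    | _ a b =>
      by_cases hab : G.Adj a b
      · rw [Set.mem_diff, mem_Dset (horT A hA) hB hab, mem_Dset hA hB hab]
        have ha := hA.2 a b hab
        have h2 : s(a, b) ∈ G.edgeSet := G.mem_edgeSet.mpr hab
        constructor
        · intro hL
          refine ⟨h2, fun hd => ?_⟩
          tauto
        · rintro ⟨-, hd⟩
          show ¬((fun x y => A y x) a b ↔ B a b)
          simp only
          tauto
      · constructor
        · rintro ⟨heE, -⟩
          exact absurd (G.mem_edgeSet.mp heE) hab
        · rintro ⟨heE, -⟩
          exact absurd (G.mem_edgeSet.mp heE) hab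
  have hDsymm : Dset G A₂ A₁ = Dset G A₁ A₂ := by
    ext e
    constructor
    · rintro ⟨heE, x, y, hexy, hd⟩
      exact ⟨heE, x, y, hexy, fun h => hd h.symm⟩
    · rintro ⟨heE, x, y, hexy, hd⟩
      exact ⟨heE, x, y, hexy, fun h => hd h.symm⟩
  have hsub : Dset G A₁ A₂ ⊆ G.edgeSet := fun e he => he.1
  have hm1le : (Dset G A₁ A₂).ncard ≤ G.edgeSet.ncard :=
    Set.ncard_le_ncard hsub (Set.toFinite _)
  have hdiff : (G.edgeSet \ Dset G A₁ A₂).ncard = G.edgeSet.ncard - (Dset G A₁ A₂).ncard :=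
    Set.ncard_diff hsub (Set.toFinite _)
  have hL1 : dth A₁ ≤ dth A₂ + (Dset G A₁ A₂).ncard :=
    dth_le_of_Dset G _ A₁ A₂ h₁ h₂ rfl
  have hL2 : dth (fun x y => A₁ y x) ≤ dth A₂ + (G.edgeSet.ncard - (Dset G A₁ A₂).ncard) := by
    apply dth_le_of_Dset G _ _ _ (horT A₁ h₁) h₂
    rw [hDtp A₁ A₂ h₁ h₂]
    exact hdiff
  have hT1 : dth A₁ ≤ dth (fun x y => A₁ y x) := tp_dth' A₁
  have hL3 : dth A₂ ≤ dth A₁ + (Dset G A₁ A₂).ncard := by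
    apply dth_le_of_Dset G _ A₂ A₁ h₂ h₁
    rw [hDsymm]
  have hL4 : dth (fun x y => A₂ y x) ≤ dth A₁ + (G.edgeSet.ncard - (Dset G A₁ A₂).ncard) := by
    apply dth_le_of_Dset G _ _ _ (horT A₂ h₂) h₁
    rw [hDtp A₂ A₁ h₂ h₁, hDsymm]
    exact hdiff
  have hT2 : dth A₂ ≤ dth (fun x y => A₂ y x) := tp_dth' A₂
  constructor <;> omega
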